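/- Let Y and Z be sets such that {∅} ⊗ ({∅} ∪ Y) = Z and Y ⊊ Z, where ⊗ denotes the unordered Cartesian product. Then Z \ Y is a singleton, i.e., |Z \ Y| = 1. -/

import Mathlib

/-- Unordered Cartesian product: `A ⊗ B = { {a,b} : a ∈ A, b ∈ B }`. -/
def ZFSet.uprod (A B : ZFSet) : ZFSet :=
  ZFSet.sep (fun z => ∃ a ∈ A, ∃ b ∈ B, z = {a, b}) (ZFSet.powerset (A ∪ B))

namespace StmtAux

/-- iterated pairing with ∅ -/
def g : ℕ → ZFSet
  | 0 => ∅
  | n + 1 => {∅, g n}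

lemma pair_ne_empty (b : ZFSet) : ({∅, b} : ZFSet) ≠ ∅ := by
  intro h
  have : (∅ : ZFSet) ∈ ({∅, b} : ZFSet) := ZFSet.mem_insert _ _
  rw [h] at this
  exact ZFSet.notMem_empty _ this

lemma pair_inj {a b : ZFSet} (h : ({∅, a} : ZFSet) = {∅, b}) : a = b := by
  have ha : a ∈ ({∅, b} : ZFSet) := by
    rw [← h]; exact ZFSet.mem_insert_of_mem _ (ZFSet.mem_singleton.2 rfl)
  have hb : b ∈ ({∅, a} : ZFSet) := by
    rw [h]; exact ZFSet.mem_insert_of_mem _ (ZFSet.mem_singleton.2 rfl)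
  rcases ZFSet.mem_insert_iff.1 ha with h1 | h1
  · rcases ZFSet.mem_insert_iff.1 hb with h2 | h2
    · rw [h1, h2]
    · exact (ZFSet.mem_singleton.1 h2).symm
  · exact ZFSet.mem_singleton.1 h1

lemma mem_uprod_special {Y z : ZFSet} :
    z ∈ ZFSet.uprod {∅} ({∅} ∪ Y) ↔ ∃ b, (b = ∅ ∨ b ∈ Y) ∧ z = {∅, b} := by
  unfold ZFSet.uprod
  rw [ZFSet.mem_sep]
  constructor
  · rintro ⟨-, a, ha, b, hb, rfl⟩
    have ha' : a = ∅ := ZFSet.mem_singleton.1 ha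
    subst ha'
    refine ⟨b, ?_, rfl⟩
    rcases ZFSet.mem_union.1 hb with h | h
    · exact Or.inl (ZFSet.mem_singleton.1 h)
    · exact Or.inr h
  · rintro ⟨b, hb, rfl⟩
    have hbU : b ∈ ({∅} ∪ Y : ZFSet) := by
      rcases hb with h | h
      · exact ZFSet.mem_union.2 (Or.inl (by simp [h]))
      · exact ZFSet.mem_union.2 (Or.inr h)
    refine ⟨?_, ∅, ZFSet.mem_singleton.2 rfl, b, hbU, rfl⟩
    rw [ZFSet.mem_powerset]
    intro x hx
    rcases ZFSet.mem_insert_iff.1 hx with h | h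
    · exact ZFSet.mem_union.2 (Or.inl (by simp [h]))
    · rw [ZFSet.mem_singleton.1 h]
      exact ZFSet.mem_union.2 (Or.inr hbU)

end StmtAux

theorem stmt_1 (Y Z : ZFSet)
    (h₁ : ZFSet.uprod {∅} ({∅} ∪ Y) = Z)
    (h₂ : Y ⊆ Z) (h₃ : Y ≠ Z) :
    ∃ u : ZFSet, Z \ Y = {u} := by
  open StmtAux in
  -- membership characterization of Z
  have hZ : ∀ z, z ∈ Z ↔ ∃ b, (b = ∅ ∨ b ∈ Y) ∧ z = {∅, b} := by
    intro z; rw [← h₁]; exact mem_uprod_special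
  -- every element of {∅} ∪ Y is an iterate g n
  have chain : ∀ u : ZFSet, (u = ∅ ∨ u ∈ Y) → ∃ n, u = g n := by
    intro u
    induction u using WellFounded.induction ZFSet.mem_wf with
    | _ u ih =>
      rintro (rfl | hu)
      · exact ⟨0, rfl⟩
      · obtain ⟨b, hb, rfl⟩ := (hZ _).1 (h₂ hu)
        have hbmem : b ∈ ({∅, b} : ZFSet) :=
          ZFSet.mem_insert_of_mem _ (ZFSet.mem_singleton.2 rfl)
        obtain ⟨n, rfl⟩ := ih b hbmem hb
        exact ⟨n + 1, rfl⟩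
  -- membership in {∅} ∪ Y propagates down the chain
  have down : ∀ n, (g (n+1) = ∅ ∨ g (n+1) ∈ Y) → (g n = ∅ ∨ g n ∈ Y) := by
    intro n h
    rcases h with h | h
    · exact absurd h (pair_ne_empty _)
    · obtain ⟨b, hb, heq⟩ := (hZ _).1 (h₂ h)
      have : b = g n := (pair_inj heq.symm)
      rwa [this] at hb
  have downle : ∀ n m, m ≤ n → (g n = ∅ ∨ g n ∈ Y) → (g m = ∅ ∨ g m ∈ Y) := by
    intro n
    induction n with
    | zero => intro m hm h; simpa [Nat.le_zero.1 hm] using h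
    | succ k ih =>
      intro m hm h
      rcases Nat.eq_or_lt_of_le hm with rfl | h'
      · exact h
      · exact ih m (Nat.lt_succ_iff.1 h') (down k h)
  -- key uniqueness claim
  have uniq : ∀ w₁ w₂, w₁ ∈ Z → w₁ ∉ Y → w₂ ∈ Z → w₂ ∉ Y → w₁ = w₂ := by
    have key : ∀ n₁ n₂ : ℕ, (g n₂ = ∅ ∨ g n₂ ∈ Y) → g (n₁ + 1) ∉ Y → n₂ ≤ n₁ := by
      intro n₁ n₂ hn₂ hw₁
      by_contra hlt
      have h1 : n₁ + 1 ≤ n₂ := Nat.lt_iff_add_one_le.1 (Nat.lt_of_not_le hlt)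
      have := downle n₂ (n₁ + 1) h1 hn₂
      rcases this with h | h
      · exact pair_ne_empty _ h
      · exact hw₁ h
    intro w₁ w₂ hw₁Z hw₁Y hw₂Z hw₂Y
    obtain ⟨b₁, hb₁, rfl⟩ := (hZ _).1 hw₁Z
    obtain ⟨b₂, hb₂, rfl⟩ := (hZ _).1 hw₂Z
    obtain ⟨n₁, rfl⟩ := chain b₁ hb₁
    obtain ⟨n₂, rfl⟩ := chain b₂ hb₂
    have e1 : n₂ ≤ n₁ := key n₁ n₂ hb₂ (show g (n₁ + 1) ∉ Y from hw₁Y)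
    have e2 : n₁ ≤ n₂ := key n₂ n₁ hb₁ (show g (n₂ + 1) ∉ Y from hw₂Y)
    rw [Nat.le_antisymm e1 e2]
  -- existence
  obtain ⟨w, hwZ, hwY⟩ : ∃ w, w ∈ Z ∧ w ∉ Y := by
    by_contra h
    push_neg at h
    exact h₃ (ZFSet.ext fun z => ⟨fun hz => h₂ hz, fun hz => h z hz⟩)
  refine ⟨w, ZFSet.ext fun z => ?_⟩
  rw [ZFSet.mem_sdiff, ZFSet.mem_singleton]
  constructor
  · rintro ⟨hzZ, hzY⟩
    exact uniq z w hzZ hzY hwZ hwY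
  · rintro rfl
    exact ⟨hwZ, hwY⟩
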